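/- For all n ≥ 1, 0 < n!·(e-1) - a(n) < 1, where a(n) = ∑_{k=1}^{n} n!/k!. -/

import Mathlib

def a (n : ℕ) : ℕ := ∑ k ∈ Finset.Icc 1 n, (Nat.factorial n) / (Nat.factorial k)

theorem floor_bounds : ∀ n : ℕ, 1 ≤ n →
    0 < ((Nat.factorial n) : ℝ) * (Real.exp 1 - 1) - a n ∧
    ((Nat.factorial n) : ℝ) * (Real.exp 1 - 1) - a n < 1 := by
  intro n hn
  set S : ℝ := ∑ i ∈ Finset.range (n + 1), ((i.factorial : ℝ))⁻¹ with hS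
  have hfac : ∀ k : ℕ, (0:ℝ) < k.factorial := fun k => by
    exact_mod_cast Nat.factorial_pos k
  have hcast : ((a n : ℝ)) = ∑ k ∈ Finset.Icc 1 n, (n.factorial : ℝ) / k.factorial := by
    rw [a, Nat.cast_sum]
    refine Finset.sum_congr rfl fun k hk => ?_
    have hk' : k ≤ n := (Finset.mem_Icc.mp hk).2
    exact Nat.cast_div_charZero (Nat.factorial_dvd_factorial hk')
  have hins : Finset.range (n + 1) = insert 0 (Finset.Icc 1 n) := by
    ext x
    simp [Finset.mem_range, Finset.mem_Icc, Nat.lt_succ_iff, Nat.one_le_iff_ne_zero]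
    omega
  have hkey : (n.factorial : ℝ) * S = n.factorial + a n := by
    rw [hS, Finset.mul_sum, hins, Finset.sum_insert (by simp)]
    rw [hcast]
    simp [← div_eq_mul_inv]
  -- lower bound: S + 1/(n+1)! ≤ exp 1
  have hlow : S + 1 / ((n + 1).factorial : ℝ) ≤ Real.exp 1 := by
    have := Real.sum_le_exp_of_nonneg (x := 1) zero_le_one (n + 2)
    rw [Finset.sum_range_succ] at this
    simpa [one_pow, one_div, ← hS] using this
  -- upper bound from exp_bound
  have hub : |Real.exp 1 - S| ≤ ((n + 2 : ℝ)) / ((n+1).factorial * (n+1)) := by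
    have h := Real.exp_bound (x := 1) (by norm_num) (n := n + 1) (Nat.succ_pos n)
    have : ((n:ℝ) + 1 + 1) = (n:ℝ) + 2 := by ring
    simpa [one_pow, one_div, ← hS, this] using h
  have hub' : Real.exp 1 - S ≤ (n + 2 : ℝ) / ((n+1).factorial * (n+1)) :=
    (abs_le.mp hub).2
  have hdiff : (n.factorial : ℝ) * (Real.exp 1 - 1) - a n
      = (n.factorial : ℝ) * (Real.exp 1 - S) := by
    have : (n.factorial : ℝ) * S = n.factorial + a n := hkey
    ring_nf
    nlinarith [hkey]
  constructor
  · rw [hdiff]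
    have : 0 < Real.exp 1 - S := by
      have : 0 < 1 / ((n+1).factorial : ℝ) := by positivity
      linarith
    positivity
  · rw [hdiff]
    have h1 : (n.factorial : ℝ) * (Real.exp 1 - S)
        ≤ (n.factorial : ℝ) * ((n + 2 : ℝ) / ((n+1).factorial * (n+1))) :=
      mul_le_mul_of_nonneg_left hub' (by positivity)
    have h2 : (n.factorial : ℝ) * ((n + 2 : ℝ) / ((n+1).factorial * (n+1))) < 1 := by
      have hfs : ((n+1).factorial : ℝ) = (n+1) * n.factorial := by
        exact_mod_cast Nat.factorial_succ n
      rw [hfs]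
      have hn1 : (1:ℝ) ≤ n := by exact_mod_cast hn
      have hf1 : (1:ℝ) ≤ n.factorial := by exact_mod_cast (Nat.one_le_iff_ne_zero.mpr (Nat.factorial_ne_zero n))
      rw [mul_div_assoc', div_lt_one (by positivity)]
      nlinarith
    linarith
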